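/- Let X be a compact metric space, U a finite open cover of X with ord(U) ≤ n+1, and m ≥ n an integer. Then there exist finite families F_1, …, F_{m+1} of pairwise disjoint closed subsets of X such that the union F = F_1 ∪ ⋯ ∪ F_{m+1} refines U and covers X at least m − n + 1 times (every point of X belongs to elements of at least m − n + 1 of the families F_i). -/

import Mathlib

/-- The order of a finite family of sets: the maximal number of its members
having a common point. -/
noncomputable def ordCover {X : Type*} (A : Finset (Set X)) : ℕ :=
  sSup {n : ℕ | ∃ x : X, ∃ B ⊆ A, B.card = n ∧ ∀ s ∈ B, x ∈ s}

/-- Kolmogorov–Ostrand covers: a finite open cover of order ≤ n+1 can be refined by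
m+1 families of disjoint closed sets which together cover X at least m−n+1 times. -/
theorem stmt_19 {X : Type*} [MetricSpace X] [CompactSpace X]
    (n m : ℕ) (hnm : n ≤ m)
    (U : Finset (Set X))
    (hopen : ∀ s ∈ U, IsOpen s)
    (hcover : ∀ x : X, ∃ s ∈ U, x ∈ s)
    (hord : ordCover U ≤ n + 1) :
    ∃ F : Fin (m + 1) → Finset (Set X),
      -- each family consists of pairwise disjoint closed sets
      (∀ i, ∀ s ∈ F i, IsClosed s) ∧
      (∀ i, ∀ s ∈ F i, ∀ t ∈ F i, s ≠ t → Disjoint s t) ∧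
      -- the union F = F_1 ∪ ⋯ ∪ F_{m+1} refines U
      (∀ i, ∀ s ∈ F i, ∃ u ∈ U, s ⊆ u) ∧
      -- and covers X at least m − n + 1 times
      (∀ x : X, m - n + 1 ≤ Set.ncard {i : Fin (m + 1) | ∃ s ∈ F i, x ∈ s}) := by
  classical
  -- the order bound in usable form
  have hbdd : BddAbove {k : ℕ | ∃ x : X, ∃ B ⊆ U, B.card = k ∧ ∀ s ∈ B, x ∈ s} := by
    refine ⟨U.card, fun k hk => ?_⟩
    obtain ⟨x, B, hBU, rfl, -⟩ := hk
    exact Finset.card_le_card hBU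
  have hfilter : ∀ x : X, (U.filter (fun s => x ∈ s)).card ≤ n + 1 := by
    intro x
    refine le_trans (le_csSup hbdd ?_) hord
    exact ⟨x, U.filter (fun s => x ∈ s), Finset.filter_subset _ _, rfl,
      fun s hs => (Finset.mem_filter.1 hs).2⟩
  -- partition of unity
  set ι := {s : Set X // s ∈ U} with hι
  have hcov : (Set.univ : Set X) ⊆ ⋃ u : ι, (u : Set X) := by
    intro x _
    obtain ⟨s, hs, hx⟩ := hcover x
    exact Set.mem_iUnion.2 ⟨⟨s, hs⟩, hx⟩
  obtain ⟨f, hf⟩ := PartitionOfUnity.exists_isSubordinate isClosed_univ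
    (fun u : ι => (u : Set X)) (fun u => hopen u u.2) hcov
  have hmem : ∀ (u : ι) (x : X), f u x ≠ 0 → x ∈ (u : Set X) := by
    intro u x hx
    exact hf u (subset_closure (by simpa [Function.mem_support] using hx))
  -- thresholds
  set ε : ℝ := 1 / ((n + 1) * (2 * m + 4)) with hεdef
  have hε0 : 0 < ε := by
    apply div_pos one_pos
    positivity
  set c : Fin (m + 1) → ℝ := fun i => (2 * (i : ℕ) + 1) * ε with hcdef
  have hc0 : ∀ i, 0 < c i := by
    intro i
    have : (0:ℝ) < (2 * (i : ℕ) + 1) := by positivity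
    exact mul_pos this hε0
  have hctop : ∀ i, c i + ε ≤ (2 * m + 2) * ε := by
    intro i
    have hi : ((i:ℕ):ℝ) ≤ (m:ℝ) := by exact_mod_cast Nat.lt_succ_iff.1 i.isLt
    simp only [hcdef]
    nlinarith [hε0.le]
  have hone : (2 * (m:ℝ) + 4) * ε = 1 / (n + 1) := by
    rw [hεdef]
    field_simp
  -- the sets
  set V : Fin (m + 1) → Finset ι → ι → Set X := fun i S u =>
    if u ∈ S then {x | c i + ε ≤ f u x} else {x | f u x ≤ c i} with hVdef
  set B : Fin (m + 1) → Finset ι → Set X := fun i S => ⋂ u : ι, V i S u with hBdef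
  refine ⟨fun i => (Finset.univ.erase (∅ : Finset ι)).image (B i), ?_, ?_, ?_, ?_⟩
  · -- closed
    intro i s hs
    obtain ⟨S, -, rfl⟩ := Finset.mem_image.1 hs
    refine isClosed_iInter fun u => ?_
    by_cases hu : u ∈ S <;> simp only [hVdef, hu, if_true, if_false]
    · exact isClosed_le continuous_const (f u).continuous
    · exact isClosed_le (f u).continuous continuous_const
  · -- disjoint
    intro i s hs t ht hst
    obtain ⟨S, -, rfl⟩ := Finset.mem_image.1 hs
    obtain ⟨T, -, rfl⟩ := Finset.mem_image.1 ht
    have hST : S ≠ T := fun h => hst (by rw [h])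
    rw [Set.disjoint_left]
    intro x hxS hxT
    have h1 : ∀ u, x ∈ V i S u := Set.mem_iInter.1 hxS
    have h2 : ∀ u, x ∈ V i T u := Set.mem_iInter.1 hxT
    obtain ⟨u, hu⟩ : ∃ u, (u ∈ S ∧ u ∉ T) ∨ (u ∈ T ∧ u ∉ S) := by
      by_contra h
      push_neg at h
      exact hST (Finset.ext fun u => ⟨fun hu => (h u).1 hu, fun hu => (h u).2 hu⟩)
    rcases hu with ⟨huS, huT⟩ | ⟨huT, huS⟩
    · have a1 : c i + ε ≤ f u x := by
        have := h1 u; simpa [hVdef, huS] using this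
      have a2 : f u x ≤ c i := by
        have := h2 u; simpa [hVdef, huT] using this
      linarith
    · have a1 : c i + ε ≤ f u x := by
        have := h2 u; simpa [hVdef, huT] using this
      have a2 : f u x ≤ c i := by
        have := h1 u; simpa [hVdef, huS] using this
      linarith
  · -- refines U
    intro i s hs
    obtain ⟨S, hS, rfl⟩ := Finset.mem_image.1 hs
    have hSne : S.Nonempty := Finset.nonempty_of_ne_empty (Finset.mem_erase.1 hS).1
    obtain ⟨u, hu⟩ := hSne
    refine ⟨u, u.2, ?_⟩
    intro x hx
    have hxu : c i + ε ≤ f u x := by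
      have := Set.mem_iInter.1 hx u; simpa [hVdef, hu] using this
    refine hmem u x ?_
    have := hc0 i
    intro h0
    rw [h0] at hxu
    linarith
  · -- covering count
    intro x
    show m - n + 1 ≤ Set.ncard
      {i : Fin (m + 1) | ∃ s ∈ (Finset.univ.erase (∅ : Finset ι)).image (B i), x ∈ s}
    -- the support set T and its max element
    set T : Finset ι := Finset.univ.filter (fun u => f u x ≠ 0) with hTdef
    have hTcard : T.card ≤ n + 1 := by
      have hinj : Set.InjOn (fun u : ι => (u : Set X)) T := fun a _ b _ h => Subtype.ext h
      have hmap : ∀ u ∈ T, (u : Set X) ∈ U.filter (fun s => x ∈ s) := by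
        intro u hu
        refine Finset.mem_filter.2 ⟨u.2, hmem u x ?_⟩
        exact (Finset.mem_filter.1 hu).2
      exact le_trans (Finset.card_le_card_of_injOn _ hmap hinj) (hfilter x)
    have hsum : ∑ u : ι, f u x = 1 := by
      rw [← finsum_eq_sum_of_fintype]
      exact f.sum_eq_one (Set.mem_univ x)
    have hsumT : ∑ u ∈ T, f u x = 1 := by
      rw [← hsum]
      exact Finset.sum_filter_ne_zero Finset.univ
    have hTne : T.Nonempty := by
      rcases T.eq_empty_or_nonempty with h | h
      · rw [h, Finset.sum_empty] at hsumT; norm_num at hsumT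
      · exact h
    obtain ⟨u₀, hu₀T, hu₀max⟩ := T.exists_max_image (fun u => f u x) hTne
    have hu₀big : (2 * (m:ℝ) + 4) * ε ≤ f u₀ x := by
      rw [hone]
      have h1 : (1:ℝ) ≤ T.card * f u₀ x := by
        calc (1:ℝ) = ∑ u ∈ T, f u x := hsumT.symm
        _ ≤ ∑ _u ∈ T, f u₀ x := Finset.sum_le_sum fun u hu => hu₀max u hu
        _ = T.card * f u₀ x := by rw [Finset.sum_const, nsmul_eq_mul]
      have h2 : (T.card : ℝ) ≤ (n:ℝ) + 1 := by exact_mod_cast hTcard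
      have hpos : (0:ℝ) < (n:ℝ) + 1 := by positivity
      rw [div_le_iff₀ hpos]
      have hf0 : 0 ≤ f u₀ x := f.nonneg u₀ x
      nlinarith
    -- bad indices
    set Bad : Finset (Fin (m + 1)) :=
      Finset.univ.filter (fun i => ∃ u : ι, c i < f u x ∧ f u x < c i + ε) with hBad
    have hBadcard : Bad.card ≤ n := by
      have hchoice : ∀ i ∈ Bad, ∃ u : ι, c i < f u x ∧ f u x < c i + ε := by
        intro i hi; exact (Finset.mem_filter.1 hi).2
      choose g hg1 hg2 using hchoice
      have hmapsto : ∀ (i : Fin (m+1)) (hi : i ∈ Bad), g i hi ∈ T.erase u₀ := by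
        intro i hi
        refine Finset.mem_erase.2 ⟨?_, ?_⟩
        · intro h
          have hlt : f u₀ x < c i + ε := by rw [← h]; exact hg2 i hi
          have htop := hctop i
          linarith [hu₀big, hε0]
        · refine Finset.mem_filter.2 ⟨Finset.mem_univ _, ?_⟩
          have hgt := hg1 i hi
          have hcp := hc0 i
          intro h0; rw [h0] at hgt; linarith
      have hinj : ∀ (i : Fin (m+1)) (hi : i ∈ Bad) (j : Fin (m+1)) (hj : j ∈ Bad),
          g i hi = g j hj → i = j := by
        intro i hi j hj hij
        by_contra hne
        have key : ∀ (a b : Fin (m+1)) (ha : a ∈ Bad) (hb : b ∈ Bad),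
            (a:ℕ) < (b:ℕ) → g a ha = g b hb → False := by
          intro a b ha hb hab heq
          have h1 : f (g a ha) x < c a + ε := hg2 a ha
          have h2 : c b < f (g b hb) x := hg1 b hb
          rw [← heq] at h2
          have : c a + ε ≤ c b := by
            simp only [hcdef]
            have : ((2 * (a:ℕ) + 2 : ℕ) : ℝ) ≤ ((2 * (b:ℕ) + 1 : ℕ) : ℝ) := by
              exact_mod_cast Nat.succ_le_of_lt (by omega)
            push_cast at this ⊢
            nlinarith [hε0.le]
          linarith
        rcases lt_or_gt_of_ne (fun h => hne h) with h | h
        · exact key i j hi hj (by exact_mod_cast h) hij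
        · exact key j i hj hi (by exact_mod_cast h) hij.symm
      have : Bad.card ≤ (T.erase u₀).card := by
        classical
        exact Finset.card_le_card_of_injOn (fun i => if hi : i ∈ Bad then g i hi else u₀)
          (fun i hi => by simp only [Finset.mem_coe] at hi ⊢; rw [dif_pos hi]; exact hmapsto i hi)
          (fun i hi j hj h => by
            simp only [Finset.mem_coe] at hi hj
            simp only [dif_pos hi, dif_pos hj] at h
            exact hinj i hi j hj h)
      refine le_trans this ?_
      have := Finset.card_erase_of_mem hu₀T
      omega
    -- good indices are covered
    have hgood : ∀ i : Fin (m + 1), i ∉ Bad →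
        ∃ s ∈ (Finset.univ.erase (∅ : Finset ι)).image (B i), x ∈ s := by
      intro i hi
      set S : Finset ι := Finset.univ.filter (fun u => c i + ε ≤ f u x) with hSdef
      have hu₀S : u₀ ∈ S := by
        refine Finset.mem_filter.2 ⟨Finset.mem_univ _, ?_⟩
        have := hctop i
        linarith [hu₀big]
      have hSne : S ≠ ∅ := fun h => by rw [h] at hu₀S; exact absurd hu₀S (Finset.notMem_empty _)
      refine ⟨B i S, Finset.mem_image.2 ⟨S, Finset.mem_erase.2 ⟨hSne, Finset.mem_univ _⟩, rfl⟩, ?_⟩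
      rw [hBdef]
      refine Set.mem_iInter.2 fun u => ?_
      by_cases hu : u ∈ S
      · have := (Finset.mem_filter.1 hu).2
        simp only [hVdef, hu, if_true]
        exact this
      · have h1 : ¬ (c i + ε ≤ f u x) := fun h =>
          hu (Finset.mem_filter.2 ⟨Finset.mem_univ _, h⟩)
        push_neg at h1
        have h2 : ¬ (c i < f u x ∧ f u x < c i + ε) := by
          intro h
          exact hi (Finset.mem_filter.2 ⟨Finset.mem_univ _, ⟨u, h⟩⟩)
        simp only [hVdef, hu, if_false, Set.mem_setOf_eq]
        by_contra h3
        push_neg at h3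
        exact h2 ⟨h3, h1⟩
    -- count
    have hsub : ↑(Finset.univ \ Bad) ⊆
        {i : Fin (m + 1) | ∃ s ∈ (Finset.univ.erase (∅ : Finset ι)).image (B i), x ∈ s} := by
      intro i hi
      rw [Finset.mem_coe, Finset.mem_sdiff] at hi
      exact hgood i hi.2
    have h1 := Set.ncard_le_ncard hsub (Set.toFinite _)
    rw [Set.ncard_coe_finset] at h1
    have h2 : (Finset.univ \ Bad).card = (m + 1) - Bad.card := by
      rw [Finset.card_sdiff_of_subset (Finset.subset_univ _)]
      simp
    omega
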